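/- Computational completeness for ℜ_d: for every formula φ₀ of 𝓛, if there exist a deterministic Kripke model ⟨W, →, ⊩⟩ and a world w ∈ W with w ⊮ φ₀, then φ₀ is not a tautology of the enumeration ξ of deterministic partial recursive functions. -/

import Mathlib

/-- Formulas of the modal language 𝓛: propositional variables, ⊥, →, and ▷. -/
inductive Formula : Type
  | var : ℕ → Formula
  | bot : Formula
  | imp : Formula → Formula → Formula
  | tri : Formula → Formula → Formula
deriving DecidableEq

namespace Formula

/-- ¬φ := φ → ⊥ -/
def neg (φ : Formula) : Formula := imp φ bot
/-- ⊤ := ¬⊥ -/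
def top : Formula := neg bot
/-- φ ∨ ψ := ¬φ → ψ -/
def disj (φ ψ : Formula) : Formula := imp (neg φ) ψ
/-- φ ∧ ψ := ¬(φ → ¬ψ) -/
def conj (φ ψ : Formula) : Formula := neg (imp φ (neg ψ))

/-- `φ` is a substitution instance of a classical propositional tautology:
it evaluates to `true` under every boolean valuation of formulas that
respects `⊥` and `→` (variables and `▷`-formulas are treated as atoms). -/
def IsPropTaut (φ : Formula) : Prop :=
  ∀ v : Formula → Bool, v bot = false →
    (∀ a b, v (imp a b) = (!(v a) || v b)) → v φ = true

/-- Hilbert-style provability.  `Prv false` is the logic ℜ (axioms: classical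
tautologies, A1, A2, A3; rules: Modus Ponens and monotonicity M);
`Prv true` is the logic ℜ_d, which additionally has axiom A4. -/
inductive Prv : Bool → Formula → Prop
  | taut {d : Bool} {φ} : IsPropTaut φ → Prv d φ
  | a1 {d : Bool} (φ ψ χ) : Prv d (imp (tri φ ψ) (imp (tri χ ψ) (tri (disj φ χ) ψ)))
  | a2 {d : Bool} (φ) : Prv d (tri bot φ)
  | a3 {d : Bool} (φ) : Prv d (tri φ top)
  | a4 (φ ψ χ) : Prv true (imp (tri φ ψ) (imp (tri φ χ) (tri φ (conj ψ χ))))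
  | mp {d : Bool} {φ ψ} : Prv d (imp φ ψ) → Prv d φ → Prv d ψ
  | mono {d : Bool} {φ₁ φ₂ ψ₁ ψ₂} : Prv d (imp φ₁ φ₂) → Prv d (imp ψ₁ ψ₂) →
      Prv d (imp (tri φ₂ ψ₁) (tri φ₁ ψ₂))

/-- `Deriv d Δ φ`: φ is derivable from the hypotheses Δ together with all
theorems of the logic (`Prv d`) using only Modus Ponens. -/
inductive Deriv (d : Bool) (Δ : Set Formula) : Formula → Prop
  | hyp {φ} : φ ∈ Δ → Deriv d Δ φ
  | thm {φ} : Prv d φ → Deriv d Δ φ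
  | mp {φ ψ} : Deriv d Δ (imp φ ψ) → Deriv d Δ φ → Deriv d Δ ψ

/-- Conjunction of a list of formulas (empty conjunction is ⊤). -/
def conjList : List Formula → Formula
  | [] => top
  | φ :: l => conj φ (conjList l)

/-- ⋀Γ : conjunction of all formulas of a finite set Γ (⋀∅ = ⊤). -/
noncomputable def bigConj (Γ : Finset Formula) : Formula := conjList Γ.toList

/-- A set of formulas is consistent if ⊥ is not derivable from it. -/
def Consistent (d : Bool) (Δ : Set Formula) : Prop := ¬ Deriv d Δ bot

/-- The pair (u,v) is w-consistent: w ⊬ ⋀u ▷ ¬⋀v. -/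
def WCons (d : Bool) (w : Set Formula) (u v : Finset Formula) : Prop :=
  ¬ Deriv d w (tri (bigConj u) (neg (bigConj v)))

/-- The operation ∼: ∼(¬φ) = φ, and ∼φ = ¬φ if φ is not a negation. -/
def simNeg : Formula → Formula
  | imp φ bot => φ
  | φ => neg φ

/-- Φ is closed under subformulas. -/
def SubClosed (Φ : Finset Formula) : Prop :=
  (∀ a b, imp a b ∈ Φ → a ∈ Φ ∧ b ∈ Φ) ∧ (∀ a b, tri a b ∈ Φ → a ∈ Φ ∧ b ∈ Φ)

/-- Φ is closed under the operation ∼. -/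
def SimClosed (Φ : Finset Formula) : Prop := ∀ φ ∈ Φ, simNeg φ ∈ Φ

/-- w is a maximal consistent subset of Φ: w ⊆ Φ, w is consistent, and for
every φ ∈ Φ either φ ∈ w or ∼φ ∈ w. -/
def MaxCons (d : Bool) (Φ : Finset Formula) (w : Finset Formula) : Prop :=
  w ⊆ Φ ∧ Consistent d ↑w ∧ ∀ φ ∈ Φ, φ ∈ w ∨ simNeg φ ∈ w

/-- Kripke forcing: `rel w u v` means u →_w v, `val w p` means w ⊩ p. -/
def Forces {W : Type*} (rel : W → W → W → Prop) (val : W → ℕ → Prop) :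
    W → Formula → Prop
  | w, var p => val w p
  | _, bot => False
  | w, imp a b => Forces rel val w a → Forces rel val w b
  | w, tri a b => ∀ u v, rel w u v → Forces rel val u a →
      ∃ v', rel w u v' ∧ Forces rel val v' b

end Formula

/-- A Kripke model: a finite set of worlds, a ternary computability relation,
and a forcing relation between worlds and propositional variables. -/
structure KripkeModel where
  W : Type
  fin : Finite W
  rel : W → W → W → Prop
  val : W → ℕ → Prop

/-- A Kripke model is deterministic if for all worlds w, u there is at most
one v with u →_w v. -/
def KripkeModel.Deterministic (M : KripkeModel) : Prop :=
  ∀ w u v v', M.rel w u v → M.rel w u v' → v = v'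

/-- Forcing in a Kripke model. -/
def KripkeModel.Forces (M : KripkeModel) : M.W → Formula → Prop :=
  Formula.Forces M.rel M.val

/-- The standard enumeration of nondeterministic partial recursive functions:
ζ_w(u) = the set of possible outputs of machine (code) w on input u. -/
def zeta (w u : ℕ) : Set ℕ :=
  {v | ((Denumerable.ofNat Nat.Partrec.Code w).eval (Nat.pair u v)).Dom}

/-- The standard enumeration of deterministic partial recursive functions:
ξ_w(u) = the value of the partial recursive function with code w on input u. -/
def xi (w u : ℕ) : Part ℕ :=
  (Denumerable.ofNat Nat.Partrec.Code w).eval u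

namespace Formula

/-- Set semantics for nondeterministic partial recursive functions
(existential reading of ▷). -/
def semN (val : ℕ → Set ℕ) : Formula → Set ℕ
  | var p => val p
  | bot => ∅
  | imp a b => (Set.univ \ semN val a) ∪ semN val b
  | tri a b => {w | ∀ u ∈ semN val a, zeta w u ≠ ∅ → zeta w u ∩ semN val b ≠ ∅}

/-- Set semantics for deterministic partial recursive functions. -/
def semD (val : ℕ → Set ℕ) : Formula → Set ℕ
  | var p => val p
  | bot => ∅
  | imp a b => (Set.univ \ semD val a) ∪ semD val b
  | tri a b => {w | ∀ u ∈ semD val a, ∀ h : (xi w u).Dom, (xi w u).get h ∈ semD val b}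

/-- Universal set semantics for nondeterministic partial recursive functions:
every terminating computation path from φ* ends in ψ*. -/
def semU (val : ℕ → Set ℕ) : Formula → Set ℕ
  | var p => val p
  | bot => ∅
  | imp a b => (Set.univ \ semU val a) ∪ semU val b
  | tri a b => {w | ∀ u ∈ semU val a, zeta w u ⊆ semU val b}

/-- A canonical injective encoding of formulas as natural numbers. -/
def enc : Formula → ℕ
  | var n => 4 * n
  | bot => 1
  | imp a b => 4 * Nat.pair (enc a) (enc b) + 2
  | tri a b => 4 * Nat.pair (enc a) (enc b) + 3

end Formula

open Formula in
/-- Computational completeness for ℜ_d: if some world of some deterministic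
Kripke model does not force φ₀, then φ₀ is not a tautology of the enumeration
ξ of deterministic partial recursive functions. -/
theorem computational_completeness_Rd (φ₀ : Formula)
    (h : ∃ (M : KripkeModel), M.Deterministic ∧ ∃ w : M.W, ¬ M.Forces w φ₀) :
    ¬ ∀ val : ℕ → Set ℕ, semD val φ₀ = Set.univ := by
  classical
  obtain ⟨M, hdet, w₀, hw₀⟩ := h
  haveI : Finite M.W := M.fin
  haveI : Fintype M.W := Fintype.ofFinite M.W
  set k := Fintype.card M.W with hk_def
  let e : M.W ≃ Fin k := Fintype.equivFin M.W
  -- abstract deterministic transition table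
  let trans : M.W → M.W → Option M.W := fun w u =>
    if hv : ∃ v, M.rel w u v then some hv.choose else none
  let t : Fin k → Fin k → Option (Fin k) := fun i j =>
    (trans (e.symm i) (e.symm j)).map e
  have ht_unfold : ∀ w u : M.W, t (e w) (e u) = (trans w u).map e := by
    intro w u
    simp only [t, Equiv.symm_apply_apply]
  have ht_some : ∀ (w u v : M.W), M.rel w u v → t (e w) (e u) = some (e v) := by
    intro w u v hr
    rw [ht_unfold]
    have hv : ∃ v, M.rel w u v := ⟨v, hr⟩
    have : hv.choose = v := hdet w u _ _ hv.choose_spec hr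
    simp only [trans, dif_pos hv, this, Option.map_some]
  have ht_inv : ∀ (w u : M.W) (m : Fin k), t (e w) (e u) = some m →
      ∃ v, M.rel w u v ∧ m = e v := by
    intro w u m hm
    rw [ht_unfold] at hm
    by_cases hv : ∃ v, M.rel w u v
    · refine ⟨hv.choose, hv.choose_spec, ?_⟩
      simp only [trans, dif_pos hv, Option.map_some, Option.some_inj] at hm
      exact hm.symm
    · simp only [trans, dif_neg hv, Option.map_none] at hm
      exact Option.noConfusion rfl (heq_of_eq hm)
  -- numeric step function
  let step : ℕ → ℕ → Option ℕ := fun i j =>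
    if hi : i < k then if hj : j < k then (t ⟨i, hi⟩ ⟨j, hj⟩).map (fun m => (m : ℕ))
    else none else none
  have hstep_eq : ∀ (w u : M.W), step (e w) (e u) = (t (e w) (e u)).map (fun m => (m : ℕ)) := by
    intro w u
    simp only [step, dif_pos (e w).isLt, dif_pos (e u).isLt, Fin.eta]
  -- primitive recursive version via table lookup
  let step' : ℕ → ℕ → Option ℕ := fun i j =>
    ((((List.range k).map (fun i => (List.range k).map (step i)))[i]?).bind
      (fun r => r[j]?)).bind (fun x => x)
  have hstep'_prim : Primrec₂ step' := by
    have h1 : Primrec fun p : ℕ × ℕ =>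
        (((List.range k).map (fun i => (List.range k).map (step i)))[p.1]?) :=
      (Primrec.list_getElem?₁ _).comp .fst
    have h2 : Primrec fun p : ℕ × ℕ =>
        ((((List.range k).map (fun i => (List.range k).map (step i)))[p.1]?).bind
          (fun r => r[p.2]?)) :=
      Primrec.option_bind h1 (Primrec.list_getElem?.comp .snd (Primrec.snd.comp .fst))
    exact Primrec.option_bind h2 Primrec.snd
  have hstep' : ∀ i j, j < k → step' i j = step i j := by
    intro i j hj
    by_cases hi : i < k
    · simp only [step', List.getElem?_map, List.getElem?_range hi,
        List.getElem?_range hj, Option.map_some, Option.bind_some]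
    · have hnone : step i j = none := by simp only [step, dif_neg hi]
      simp [step', List.getElem?_eq_none, List.length_map,
        List.length_range, Nat.le_of_not_lt hi, hnone]
  -- the fixed-point code
  obtain ⟨cF, hcF⟩ : ∃ cF : Nat.Partrec.Code, ∀ n : ℕ,
      Nat.Partrec.Code.eval cF n = Part.ofOption
      (if (((List.range k).map
            (fun j => Encodable.encode (Nat.Partrec.Code.curry cF j))).idxOf n.unpair.2) < k
       then (step' n.unpair.1 (((List.range k).map
            (fun j => Encodable.encode (Nat.Partrec.Code.curry cF j))).idxOf n.unpair.2)).map
           (fun m => Encodable.encode (Nat.Partrec.Code.curry cF m))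
       else none) := by
    have hL : Primrec fun c : Nat.Partrec.Code =>
        (List.range k).map (fun j => Encodable.encode (Nat.Partrec.Code.curry c j)) :=
      Primrec.list_map (Primrec.const _)
        (Primrec.encode.comp (Nat.Partrec.Code.primrec₂_curry.comp .fst .snd)).to₂
    have hu : Primrec fun p : Nat.Partrec.Code × ℕ => p.2.unpair.2 :=
      Primrec.snd.comp (Primrec.unpair.comp .snd)
    have hidx : Primrec fun p : Nat.Partrec.Code × ℕ =>
        (((List.range k).map
          (fun j => Encodable.encode (Nat.Partrec.Code.curry p.1 j))).idxOf p.2.unpair.2) :=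
      Primrec.list_idxOf.comp hu (hL.comp .fst)
    have hcond : PrimrecPred fun p : Nat.Partrec.Code × ℕ =>
        (((List.range k).map
          (fun j => Encodable.encode (Nat.Partrec.Code.curry p.1 j))).idxOf p.2.unpair.2) < k :=
      Primrec.nat_lt.comp hidx (Primrec.const k)
    have hthen : Primrec fun p : Nat.Partrec.Code × ℕ =>
        (step' p.2.unpair.1
          (((List.range k).map
            (fun j => Encodable.encode (Nat.Partrec.Code.curry p.1 j))).idxOf
              p.2.unpair.2)).map
          (fun m => Encodable.encode (Nat.Partrec.Code.curry p.1 m)) :=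
      Primrec.option_map
        (hstep'_prim.comp (Primrec.fst.comp (Primrec.unpair.comp .snd)) hidx)
        (Primrec.encode.comp (Nat.Partrec.Code.primrec₂_curry.comp (Primrec.fst.comp .fst) .snd)).to₂
    have ho : Primrec fun p : Nat.Partrec.Code × ℕ =>
        (if (((List.range k).map
              (fun j => Encodable.encode (Nat.Partrec.Code.curry p.1 j))).idxOf
                p.2.unpair.2) < k
         then (step' p.2.unpair.1 (((List.range k).map
              (fun j => Encodable.encode (Nat.Partrec.Code.curry p.1 j))).idxOf
                p.2.unpair.2)).map
             (fun m => Encodable.encode (Nat.Partrec.Code.curry p.1 m))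
         else none) := Primrec.ite hcond hthen (Primrec.const none)
    have hp : Partrec₂ fun (c : Nat.Partrec.Code) (n : ℕ) => (Part.ofOption
        (if (((List.range k).map
              (fun j => Encodable.encode (Nat.Partrec.Code.curry c j))).idxOf n.unpair.2) < k
         then (step' n.unpair.1 (((List.range k).map
              (fun j => Encodable.encode (Nat.Partrec.Code.curry c j))).idxOf n.unpair.2)).map
             (fun m => Encodable.encode (Nat.Partrec.Code.curry c m))
         else none) : Part ℕ) := Computable.ofOption ho.to_comp
    obtain ⟨cF, hcF⟩ := Nat.Partrec.Code.fixed_point₂ hp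
    exact ⟨cF, fun n => congrFun hcF n⟩
  set L : List ℕ := (List.range k).map
    (fun j => Encodable.encode (Nat.Partrec.Code.curry cF j)) with hL_def
  let C : M.W → ℕ := fun w => Encodable.encode (Nat.Partrec.Code.curry cF (e w))
  have Cinj : Function.Injective C := by
    intro w1 w2 h12
    have h1 := Encodable.encode_injective h12
    have h2 := (Nat.Partrec.Code.curry_inj h1).2
    exact e.injective (Fin.val_injective h2)
  have hlen : L.length = k := by simp [hL_def]
  have hmemL : ∀ u : ℕ, u ∈ L ↔ ∃ w', C w' = u := by
    intro u
    constructor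
    · intro hu
      rw [hL_def, List.mem_map] at hu
      obtain ⟨j, hj, hju⟩ := hu
      rw [List.mem_range] at hj
      refine ⟨e.symm ⟨j, hj⟩, ?_⟩
      simp only [C, Equiv.apply_symm_apply]
      exact hju
    · rintro ⟨w', rfl⟩
      rw [hL_def, List.mem_map]
      exact ⟨e w', List.mem_range.2 (e w').isLt, rfl⟩
  have hindex : ∀ w' : M.W, L.idxOf (C w') = (e w' : ℕ) := by
    intro w'
    have hmem : C w' ∈ L := (hmemL (C w')).2 ⟨w', rfl⟩
    have hlt : L.idxOf (C w') < L.length := List.idxOf_lt_length_iff.2 hmem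
    have hget : L.get ⟨L.idxOf (C w'), hlt⟩ = C w' := List.idxOf_get hlt
    have hlt' : L.idxOf (C w') < k := hlen ▸ hlt
    have hgetval : L.get ⟨L.idxOf (C w'), hlt⟩ =
        Encodable.encode (Nat.Partrec.Code.curry cF (L.idxOf (C w'))) := by
      simp only [hL_def, List.get_eq_getElem, List.getElem_map, List.getElem_range]
    rw [hgetval] at hget
    exact ((Nat.Partrec.Code.curry_inj (Encodable.encode_injective hget)).2)
  have heval : ∀ (w : M.W) (u : ℕ), xi (C w) u = Part.ofOption
      (if L.idxOf u < k then
        (step' (e w) (L.idxOf u)).map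
          (fun m => Encodable.encode (Nat.Partrec.Code.curry cF m))
       else none) := by
    intro w u
    show Nat.Partrec.Code.eval (Denumerable.ofNat Nat.Partrec.Code (C w)) u = _
    rw [show (Denumerable.ofNat Nat.Partrec.Code (C w)) =
        Nat.Partrec.Code.curry cF (e w) from Denumerable.ofNat_encode _]
    rw [Nat.Partrec.Code.eval_curry, hcF]
    simp [Nat.unpair_pair]
  -- the valuation
  set val : ℕ → Set ℕ := fun p => C '' {w | M.val w p} with hval_def
  have main : ∀ (φ : Formula) (w : M.W), C w ∈ semD val φ ↔ M.Forces w φ := by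
    intro φ
    induction φ with
    | var p =>
      intro w
      show C w ∈ val p ↔ M.val w p
      rw [hval_def]
      exact Cinj.mem_set_image
    | bot =>
      intro w
      show C w ∈ (∅ : Set ℕ) ↔ False
      simp
    | imp a b iha ihb =>
      intro w
      show C w ∈ (Set.univ \ semD val a) ∪ semD val b ↔
        (M.Forces w a → M.Forces w b)
      simp only [Set.mem_union, Set.mem_diff, Set.mem_univ, true_and]
      rw [iha w, ihb w]
      tauto
    | tri a b iha ihb =>
      intro w
      show (C w ∈ {n | ∀ u ∈ semD val a, ∀ h : (xi n u).Dom, (xi n u).get h ∈ semD val b}) ↔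
        (∀ u v, M.rel w u v → M.Forces u a → ∃ v', M.rel w u v' ∧ M.Forces v' b)
      simp only [Set.mem_setOf_eq]
      constructor
      · intro hsem u' v hrel hfa
        have hx : xi (C w) (C u') = Part.some (Encodable.encode
            (Nat.Partrec.Code.curry cF (e v))) := by
          rw [heval w (C u'), hindex u', if_pos (e u').isLt, hstep' _ _ (e u').isLt,
            hstep_eq w u', ht_some w u' v hrel]
          rfl
        have hdom : (xi (C w) (C u')).Dom := by rw [hx]; trivial
        have hb := hsem (C u') ((iha u').mpr hfa) hdom
        have hmemx : Encodable.encode (Nat.Partrec.Code.curry cF (e v)) ∈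
            xi (C w) (C u') := by
          rw [hx]; exact Part.mem_some _
        rw [Part.get_eq_of_mem hmemx hdom] at hb
        exact ⟨v, hrel, (ihb v).mp hb⟩
      · intro hF u hu hdom
        have hdom2 : (Part.ofOption
            (if L.idxOf u < k then
              (step' (e w) (L.idxOf u)).map
                (fun m => Encodable.encode (Nat.Partrec.Code.curry cF m))
             else none)).Dom := by
          rw [← heval w u]; exact hdom
        by_cases hlt : L.idxOf u < k
        · have humem : u ∈ L := List.idxOf_lt_length_iff.1 (by rw [hlen]; exact hlt)
          obtain ⟨w', rfl⟩ := (hmemL u).1 humem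
          rw [hindex w', if_pos (e w').isLt, hstep' _ _ (e w').isLt,
            hstep_eq w w'] at hdom2
          obtain ⟨m, hm⟩ : ∃ m, t (e w) (e w') = some m := by
            rcases hmop : t (e w) (e w') with _ | m
            · rw [hmop] at hdom2; simp [Part.ofOption] at hdom2
            · exact ⟨m, rfl⟩
          obtain ⟨v, hrelv, rfl⟩ := ht_inv w w' m hm
          have hfa : M.Forces w' a := (iha w').mp hu
          obtain ⟨v'', hrel'', hb''⟩ := hF w' v hrelv hfa
          have hveq : v'' = v := hdet w w' v'' v hrel'' hrelv
          subst hveq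
          have hx : xi (C w) (C w') = Part.some (Encodable.encode
              (Nat.Partrec.Code.curry cF (e v''))) := by
            rw [heval w (C w'), hindex w', if_pos (e w').isLt, hstep' _ _ (e w').isLt,
              hstep_eq w w', hm]
            rfl
          have hmemx : Encodable.encode (Nat.Partrec.Code.curry cF (e v'')) ∈
              xi (C w) (C w') := by
            rw [hx]; exact Part.mem_some _
          rw [Part.get_eq_of_mem hmemx hdom]
          exact (ihb v'').mpr hb''
        · rw [if_neg hlt] at hdom2
          simp [Part.ofOption] at hdom2
  intro htaut
  have := (main φ₀ w₀).mp (by rw [htaut val]; trivial)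
  exact hw₀ this
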